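/- Let A and Ω be finite (or countable) types, η0 a design on A, and m a Markov kernel assigning to each z ∈ A a probability mass function m(·|z) on Ω; consider the joint distribution P(z, w) = η0(z) m(w|z) on A × Ω. For each w ∈ Ω with positive marginal probability p(w) = Σ_z η0(z) m(w|z) > 0, define the conditional design η_w(z) = η0(z) m(w|z) / p(w). Let τ̂ : A → ℝ, τ ∈ ℝ, 0 < α < 1/2, and suppose for each such w there are reals U_w, L_w with P_{η_w}({z : τ̂(z) − τ > U_w}) ≤ α and P_{η_w}({z : τ̂(z) − τ < L_w}) ≤ α. Then the stochastic oracle procedure is η0-valid: the joint probability P({(z, w) : τ̂(z) − U_w ≤ τ and τ ≤ τ̂(z) − L_w}) ≥ 1 − 2α. (Paper's Theorem 2 on stochastic conditional design maps.) -/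
import Mathlib


open scoped Classical

/-- The conditional design of `η0` given the auxiliary draw `w` from the
Markov kernel `m`: `η_w(z) = η0(z) m(w|z) / p(w)`. -/
noncomputable def stochCondDesign {A : Type*} {Ω : Type*} [Fintype A]
    (η0 : A → ℝ) (m : A → Ω → ℝ) (w : Ω) (z : A) : ℝ :=
  η0 z * m z w / (∑ z', η0 z' * m z' w)

/-- Paper's Theorem 2: the stochastic oracle procedure built with a stochastic
conditional design map is `η0`-valid (jointly over the assignment and the
auxiliary randomness `w`). -/
theorem stochastic_conditional_as_if_valid {A : Type*} {Ω : Type*}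
    [Fintype A] [Fintype Ω]
    (η0 : A → ℝ) (hη0 : ∀ z, 0 ≤ η0 z) (hsum : ∑ z, η0 z = 1)
    (m : A → Ω → ℝ) (hm : ∀ z w, 0 ≤ m z w) (hmsum : ∀ z, ∑ w, m z w = 1)
    (tauhat : A → ℝ) (τ : ℝ) (α : ℝ) (hα0 : 0 < α) (hα1 : α < 1 / 2)
    (U L : Ω → ℝ)
    (hU : ∀ w : Ω, 0 < (∑ z, η0 z * m z w) →
      (∑ z, if tauhat z - τ > U w then stochCondDesign η0 m w z else 0) ≤ α)
    (hL : ∀ w : Ω, 0 < (∑ z, η0 z * m z w) →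
      (∑ z, if tauhat z - τ < L w then stochCondDesign η0 m w z else 0) ≤ α) :
    1 - 2 * α ≤
      ∑ z, ∑ w, if tauhat z - U w ≤ τ ∧ τ ≤ tauhat z - L w
        then η0 z * m z w else 0 := by
  set p : Ω → ℝ := fun w => ∑ z, η0 z * m z w with hp
  have hmassnn : ∀ z w, 0 ≤ η0 z * m z w := fun z w => mul_nonneg (hη0 z) (hm z w)
  have hpnn : ∀ w, 0 ≤ p w := fun w => Finset.sum_nonneg fun z _ => hmassnn z w
  have hpsum : ∑ w, p w = 1 := by
    rw [hp]
    rw [Finset.sum_comm]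
    calc ∑ z, ∑ w, η0 z * m z w = ∑ z, η0 z * ∑ w, m z w := by
          simp [Finset.mul_sum]
      _ = 1 := by simp [hmsum, hsum]
  -- key bound for a general predicate
  have key : ∀ (P : A → Prop) (w : Ω),
      ((∑ z, if P z then stochCondDesign η0 m w z else 0) ≤ α) →
      (∑ z, if P z then η0 z * m z w else 0) ≤ α * p w ∨ p w = 0 := by
    intro P w h
    rcases eq_or_lt_of_le (hpnn w) with h0 | h0
    · exact Or.inr h0.symm
    · left
      have hrw : (∑ z, if P z then stochCondDesign η0 m w z else 0)
          = (∑ z, if P z then η0 z * m z w else 0) / p w := by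
        rw [Finset.sum_div]
        refine Finset.sum_congr rfl fun z _ => ?_
        split <;> simp [stochCondDesign, hp]
      rw [hrw, div_le_iff₀ h0] at h
      linarith
  have keyU : ∀ w, (∑ z, if tauhat z - τ > U w then η0 z * m z w else 0) ≤ α * p w := by
    intro w
    rcases eq_or_lt_of_le (hpnn w) with h0 | h0
    · have hz : ∀ z ∈ Finset.univ, η0 z * m z w = 0 := by
        intro z hzmem
        exact (Finset.sum_eq_zero_iff_of_nonneg (fun z _ => hmassnn z w)).mp h0.symm z hzmem
      have : (∑ z, if tauhat z - τ > U w then η0 z * m z w else 0) = 0 :=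
        Finset.sum_eq_zero fun z hzm => by split <;> simp [hz z hzm]
      rw [this, ← h0]; simp
    · rcases key (fun z => tauhat z - τ > U w) w (hU w h0) with h | h
      · exact h
      · exact absurd h (ne_of_gt h0)
  have keyL : ∀ w, (∑ z, if tauhat z - τ < L w then η0 z * m z w else 0) ≤ α * p w := by
    intro w
    rcases eq_or_lt_of_le (hpnn w) with h0 | h0
    · have hz : ∀ z ∈ Finset.univ, η0 z * m z w = 0 := by
        intro z hzmem
        exact (Finset.sum_eq_zero_iff_of_nonneg (fun z _ => hmassnn z w)).mp h0.symm z hzmem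
      have : (∑ z, if tauhat z - τ < L w then η0 z * m z w else 0) = 0 :=
        Finset.sum_eq_zero fun z hzm => by split <;> simp [hz z hzm]
      rw [this, ← h0]; simp
    · rcases key (fun z => tauhat z - τ < L w) w (hL w h0) with h | h
      · exact h
      · exact absurd h (ne_of_gt h0)
  -- bad event bound
  have hbad : (∑ z, ∑ w, if ¬ (tauhat z - U w ≤ τ ∧ τ ≤ tauhat z - L w)
      then η0 z * m z w else 0) ≤ 2 * α := by
    have hpt : ∀ z w, (if ¬ (tauhat z - U w ≤ τ ∧ τ ≤ tauhat z - L w)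
        then η0 z * m z w else 0)
        ≤ (if tauhat z - τ > U w then η0 z * m z w else 0)
          + (if tauhat z - τ < L w then η0 z * m z w else 0) := by
      intro z w
      have hx := hmassnn z w
      by_cases h1 : tauhat z - U w ≤ τ ∧ τ ≤ tauhat z - L w
      · rw [if_neg (not_not_intro h1)]
        split_ifs <;> linarith
      · rw [if_pos h1]
        rcases not_and_or.mp h1 with h | h <;> push_neg at h <;>
          split_ifs <;> linarith
    calc (∑ z, ∑ w, if ¬ (tauhat z - U w ≤ τ ∧ τ ≤ tauhat z - L w)
          then η0 z * m z w else 0)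
        ≤ ∑ z, ∑ w, ((if tauhat z - τ > U w then η0 z * m z w else 0)
            + (if tauhat z - τ < L w then η0 z * m z w else 0)) := by
          refine Finset.sum_le_sum fun z _ => Finset.sum_le_sum fun w _ => hpt z w
      _ = (∑ w, ∑ z, if tauhat z - τ > U w then η0 z * m z w else 0)
          + (∑ w, ∑ z, if tauhat z - τ < L w then η0 z * m z w else 0) := by
          rw [← Finset.sum_add_distrib]
          rw [Finset.sum_comm]
          simp [Finset.sum_add_distrib]
      _ ≤ (∑ w, α * p w) + (∑ w, α * p w) := by
          exact add_le_add (Finset.sum_le_sum fun w _ => keyU w)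
            (Finset.sum_le_sum fun w _ => keyL w)
      _ = 2 * α := by rw [← Finset.mul_sum, hpsum]; ring
  have htot : (∑ z, ∑ w, if tauhat z - U w ≤ τ ∧ τ ≤ tauhat z - L w
        then η0 z * m z w else 0)
      + (∑ z, ∑ w, if ¬ (tauhat z - U w ≤ τ ∧ τ ≤ tauhat z - L w)
        then η0 z * m z w else 0) = 1 := by
    rw [← Finset.sum_add_distrib]
    have : ∀ z, (∑ w, if tauhat z - U w ≤ τ ∧ τ ≤ tauhat z - L w
          then η0 z * m z w else 0)
        + (∑ w, if ¬ (tauhat z - U w ≤ τ ∧ τ ≤ tauhat z - L w)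
          then η0 z * m z w else 0) = η0 z := by
      intro z
      rw [← Finset.sum_add_distrib]
      have : ∀ w, (if tauhat z - U w ≤ τ ∧ τ ≤ tauhat z - L w
            then η0 z * m z w else 0)
          + (if ¬ (tauhat z - U w ≤ τ ∧ τ ≤ tauhat z - L w)
            then η0 z * m z w else 0) = η0 z * m z w := by
        intro w; split_ifs <;> simp_all
      rw [Finset.sum_congr rfl fun w _ => this w, ← Finset.mul_sum, hmsum, mul_one]
    rw [Finset.sum_congr rfl fun z _ => this z, hsum]
  linarith
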